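/- arXiv:2406.18101 — 4 statements merged into one kernel-verified Lean document; each statement's English description precedes it below -/
import Mathlib

section
/- Let functions of x and discrete n, m satisfy the three relations of Proposition 2.1: S^{(i,j)}_x = S^{(i,j+1)} + S^{(i+1,j)} - S^{(0,j)}S^{(i,0)}, p·S̃^{(i,j)} = S̃^{(i,j+1)} + p·S^{(i,j)} + S^{(i+1,j)} - S̃^{(i,0)}S^{(0,j)}, and q·Ŝ^{(i,j)} = Ŝ^{(i,j+1)} + q·S^{(i,j)} + S^{(i+1,j)} - Ŝ^{(i,0)}S^{(0,j)} for all integers i, j. Then u := S^{(0,0)} satisfies the D∆²pKP equation ∂_x(û - ũ) = (p - q + û - ũ)(u + û̃ - û - ũ). -/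
/-- From the three relations of Proposition 2.1, `u = S⁽⁰⁰⁾` satisfies the
D∆²pKP equation `∂ₓ(û - ũ) = (p - q + û - ũ)(u + û̃ - û - ũ)`. -/
theorem DDpKP_from_S_relations (S : ℤ → ℤ → ℝ → ℤ → ℤ → ℂ) (p q : ℂ)
    (hx : ∀ i j x n m, HasDerivAt (fun t => S i j t n m)
      (S i (j + 1) x n m + S (i + 1) j x n m - S 0 j x n m * S i 0 x n m) x)
    (hn : ∀ i j x n m, p * S i j x (n + 1) m =
      S i (j + 1) x (n + 1) m + p * S i j x n m + S (i + 1) j x n m -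
        S i 0 x (n + 1) m * S 0 j x n m)
    (hm : ∀ i j x n m, q * S i j x n (m + 1) =
      S i (j + 1) x n (m + 1) + q * S i j x n m + S (i + 1) j x n m -
        S i 0 x n (m + 1) * S 0 j x n m) :
    ∀ x n m, HasDerivAt (fun t => S 0 0 t n (m + 1) - S 0 0 t (n + 1) m)
      ((p - q + S 0 0 x n (m + 1) - S 0 0 x (n + 1) m) *
        (S 0 0 x n m + S 0 0 x (n + 1) (m + 1) - S 0 0 x n (m + 1) -
          S 0 0 x (n + 1) m)) x := by
  intro x n m
  have h := (hx 0 0 x n (m + 1)).sub (hx 0 0 x (n + 1) m)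
  convert h using 1
  case e'_4 => rfl
  case e'_8 => rfl
  linear_combination hm 0 0 x n m - hn 0 0 x n m + hn 0 0 x n (m + 1) -
    hm 0 0 x (n + 1) m
end

section
/- Assume the relations of Proposition 2.1 hold for all i, j ∈ ℤ. Then v := 1 - S^{(-1,0)} satisfies the D∆²pmKP equation (p·v̂ - q·ṽ)/v̂̃ - (ṽ_x + p·v)/ṽ + (v̂_x + q·v)/v̂ = 0, provided ṽ, v̂, v̂̃ are nonvanishing. -/
/-- From the relations of Proposition 2.1, `v = 1 - S⁽⁻¹'⁰⁾` satisfies the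
D∆²pmKP equation `(p v̂ - q ṽ)/v̂̃ - (ṽ_x + p v)/ṽ + (v̂_x + q v)/v̂ = 0`. -/
theorem DDpmKP_from_S_relations (S : ℤ → ℤ → ℝ → ℤ → ℤ → ℂ) (p q : ℂ)
    (hx : ∀ i j x n m, HasDerivAt (fun t => S i j t n m)
      (S i (j + 1) x n m + S (i + 1) j x n m - S 0 j x n m * S i 0 x n m) x)
    (hn : ∀ i j x n m, p * S i j x (n + 1) m =
      S i (j + 1) x (n + 1) m + p * S i j x n m + S (i + 1) j x n m -
        S i 0 x (n + 1) m * S 0 j x n m)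
    (hm : ∀ i j x n m, q * S i j x n (m + 1) =
      S i (j + 1) x n (m + 1) + q * S i j x n m + S (i + 1) j x n m -
        S i 0 x n (m + 1) * S 0 j x n m)
    (v : ℝ → ℤ → ℤ → ℂ)
    (hv : ∀ x n m, v x n m = 1 - S (-1) 0 x n m)
    (hne : ∀ x n m, v x n m ≠ 0) :
    ∀ x n m,
      (p * v x n (m + 1) - q * v x (n + 1) m) / v x (n + 1) (m + 1) -
        (deriv (fun t => v t (n + 1) m) x + p * v x n m) / v x (n + 1) m +
        (deriv (fun t => v t n (m + 1)) x + q * v x n m) / v x n (m + 1) = 0 := by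
  intro x n m
  have hvfun : ∀ n m : ℤ, (fun t => v t n m) = (fun t => 1 - S (-1) 0 t n m) := by
    intro n m; funext t; exact hv t n m
  have hd : ∀ (n m : ℤ), deriv (fun t => v t n m) x =
      -(S (-1) 1 x n m + S 0 0 x n m - S 0 0 x n m * S (-1) 0 x n m) := by
    intro n m
    rw [hvfun]
    have h := ((hx (-1) 0 x n m).const_sub 1)
    norm_num at h
    rw [h.deriv]; ring
  have h1 := hn (-1) 0 x n m
  have h2 := hn (-1) 0 x n (m+1)
  have h3 := hm (-1) 0 x n m
  have h4 := hm (-1) 0 x (n+1) m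
  norm_num at h1 h2 h3 h4
  have e1 : v x (n+1) m ≠ 0 := hne x (n+1) m
  have e2 : v x n (m+1) ≠ 0 := hne x n (m+1)
  have e3 : v x (n+1) (m+1) ≠ 0 := hne x (n+1) (m+1)
  have E2 : deriv (fun t => v t (n + 1) m) x + p * v x n m =
      v x (n+1) m * (p + S 0 0 x n m - S 0 0 x (n+1) m) := by
    rw [hd, hv x n m, hv x (n+1) m]; linear_combination h1
  have E3 : deriv (fun t => v t n (m + 1)) x + q * v x n m =
      v x n (m+1) * (q + S 0 0 x n m - S 0 0 x n (m+1)) := by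
    rw [hd, hv x n m, hv x n (m+1)]; linear_combination h3
  have E1 : p * v x n (m+1) - q * v x (n+1) m =
      v x (n+1) (m+1) * (p - q + S 0 0 x n (m+1) - S 0 0 x (n+1) m) := by
    rw [hv x n (m+1), hv x (n+1) m, hv x (n+1) (m+1)]; linear_combination h2 - h4
  rw [E1, E2, E3, mul_div_cancel_left₀ _ e3, mul_div_cancel_left₀ _ e1,
    mul_div_cancel_left₀ _ e2]
  ring
end

section
/- Suppose M̃ = M + r·s̃ᵀ with r̃ = (pI+K)·r, sᵀ = s̃ᵀ·(pI-L), and I+M, I+M̃ invertible, and define τ = det(I+M), Y(a) = 1 - sᵀ(aI+L)⁻¹(I+M)⁻¹r. Then τ̃/τ = Y(-p), i.e. det(I+M̃)/det(I+M) = 1 - sᵀ(L - pI)⁻¹(I+M)⁻¹r, provided pI - L is invertible. -/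
open Matrix

lemma matrix_inv_neg {n : ℕ} (A : Matrix (Fin n) (Fin n) ℂ) (hA : IsUnit A) :
    (-A)⁻¹ = -A⁻¹ := by
  apply Matrix.inv_eq_right_inv
  rw [Matrix.neg_mul, Matrix.mul_neg, neg_neg,
    Matrix.mul_nonsing_inv _ (Matrix.isUnit_iff_isUnit_det A |>.mp hA)]

/-- The τ-function quotient: `det(I+M̃)/det(I+M) = 1 - sᵀ(L - pI)⁻¹(I+M)⁻¹ r`. -/
theorem tau_quotient {N : ℕ} (K L M Mt : Matrix (Fin N) (Fin N) ℂ)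
    (r s st : Fin N → ℂ) (p : ℂ)
    (hM : Mt = M + Matrix.vecMulVec r st)
    (hs : Matrix.vecMul st (p • (1 : Matrix (Fin N) (Fin N) ℂ) - L) = s)
    (hinv : IsUnit (1 + M))
    (hpL : IsUnit (p • (1 : Matrix (Fin N) (Fin N) ℂ) - L)) :
    (1 + Mt).det / (1 + M).det =
      1 - dotProduct
        (Matrix.vecMul s ((L - p • (1 : Matrix (Fin N) (Fin N) ℂ))⁻¹ * (1 + M)⁻¹)) r := by
  set A := (1 : Matrix (Fin N) (Fin N) ℂ) + M with hA
  set P := p • (1 : Matrix (Fin N) (Fin N) ℂ) - L with hP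
  have hdet : IsUnit A.det := (Matrix.isUnit_iff_isUnit_det A).mp hinv
  -- rewrite RHS
  have hLmp : L - p • (1 : Matrix (Fin N) (Fin N) ℂ) = -P := by rw [hP]; abel
  have hsst : Matrix.vecMul s ((L - p • (1 : Matrix (Fin N) (Fin N) ℂ))⁻¹) = -st := by
    rw [hLmp, matrix_inv_neg P hpL, ← hs, Matrix.vecMul_neg,
      Matrix.vecMul_vecMul, Matrix.mul_nonsing_inv _
        ((Matrix.isUnit_iff_isUnit_det P).mp hpL), Matrix.vecMul_one]
  have hRHS : Matrix.vecMul s ((L - p • (1 : Matrix (Fin N) (Fin N) ℂ))⁻¹ * A⁻¹) =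
      -(Matrix.vecMul st A⁻¹) := by
    rw [← Matrix.vecMul_vecMul, hsst, Matrix.neg_vecMul]
  rw [hRHS, neg_dotProduct, sub_neg_eq_add]
  -- LHS via matrix determinant lemma
  have h1 : (1 : Matrix (Fin N) (Fin N) ℂ) + Mt = A + replicateCol (Fin 1) r * replicateRow (Fin 1) st := by
    rw [hM, Matrix.vecMulVec_eq (Fin 1), hA, add_assoc]; rfl
  rw [h1]; erw [Matrix.det_add_replicateCol_mul_replicateRow hdet]
  rw [mul_comm, mul_div_assoc, div_self hdet.ne_zero, mul_one]
  simp [Matrix.det_fin_one, Matrix.mul_apply, Matrix.vecMul, dotProduct,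
    Finset.mul_sum, Finset.sum_mul, mul_comm, mul_assoc, mul_left_comm]
end

section
/- Let N = 1, K = (k), L = (l) with k + l ≠ 0, and r = ρ, s = σ with ρ(x,n,m) = (p+k)ⁿ(q+k)ᵐ e^{kx}, σ(x,n,m) = (p-l)^{-n}(q-l)^{-m} e^{lx}, M = ρσ/(k+l), assuming 1 + M ≠ 0 everywhere. Then u = S^{(0,0)} = ρσ/(1 + ρσ/(k+l)) satisfies the D∆²pKP equation ∂_x(û - ũ) = (p - q + û - ũ)(u + û̃ - û - ũ) (one-soliton solution). -/
set_option maxHeartbeats 2000000 in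
/-- One-soliton solution of the D∆²pKP equation: with
`ρ = (p+k)ⁿ(q+k)ᵐ e^{kx}`, `σ = (p-l)⁻ⁿ(q-l)⁻ᵐ e^{lx}`, `M = ρσ/(k+l)`,
the function `u = ρσ/(1 + ρσ/(k+l))` satisfies
`∂ₓ(û - ũ) = (p - q + û - ũ)(u + û̃ - û - ũ)`. -/
theorem one_soliton_DDpKP (p q k l : ℂ)
    (hpk : p + k ≠ 0) (hqk : q + k ≠ 0) (hpl : p - l ≠ 0) (hql : q - l ≠ 0)
    (hkl : k + l ≠ 0)
    (ρ σM : ℝ → ℤ → ℤ → ℂ)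
    (hρ : ∀ x n m, ρ x n m = (p + k) ^ n * (q + k) ^ m * Complex.exp (k * x))
    (hσ : ∀ x n m, σM x n m = (p - l) ^ (-n) * (q - l) ^ (-m) * Complex.exp (l * x))
    (hM : ∀ x n m, 1 + ρ x n m * σM x n m / (k + l) ≠ 0)
    (u : ℝ → ℤ → ℤ → ℂ)
    (hu : ∀ x n m, u x n m =
      ρ x n m * σM x n m / (1 + ρ x n m * σM x n m / (k + l))) :
    ∀ x n m, HasDerivAt (fun t => u t n (m + 1) - u t (n + 1) m)
      ((p - q + u x n (m + 1) - u x (n + 1) m) *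
        (u x n m + u x (n + 1) (m + 1) - u x n (m + 1) - u x (n + 1) m)) x := by
  intro x n m
  -- reformulated nonvanishing and value of u
  have hM' : ∀ t n m, k + l + ρ t n m * σM t n m ≠ 0 := by
    intro t n m
    have h := hM t n m
    intro hcon
    apply h
    field_simp
    linear_combination hcon
  have hu' : ∀ t n m, u t n m =
      (k + l) * (ρ t n m * σM t n m) / (k + l + ρ t n m * σM t n m) := by
    intro t n m
    rw [hu]
    rw [div_eq_div_iff (hM t n m) (hM' t n m)]
    field_simp
  -- key derivative: u' = (k+l) u - u²
  have key : ∀ n m : ℤ, HasDerivAt (fun t => u t n m)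
      ((k + l) * u x n m - (u x n m) ^ 2) x := by
    intro n m
    set c : ℂ := (p + k) ^ n * (q + k) ^ m * ((p - l) ^ (-n) * (q - l) ^ (-m)) with hc
    have hEfun : ∀ t : ℝ, ρ t n m * σM t n m = c * Complex.exp ((k + l) * t) := by
      intro t
      rw [hρ, hσ, hc, add_mul, Complex.exp_add]
      ring
    have hExp : HasDerivAt (fun t : ℝ => Complex.exp ((k + l) * t))
        ((k + l) * Complex.exp ((k + l) * x)) x := by
      have h1 : HasDerivAt (fun t : ℝ => ((t : ℂ))) 1 x := Complex.ofRealCLM.hasDerivAt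
      have h2 := ((h1.const_mul (k + l)).cexp)
      simpa [mul_comm] using h2
    have hE : HasDerivAt (fun t => ρ t n m * σM t n m)
        ((k + l) * (ρ x n m * σM x n m)) x := by
      have := hExp.const_mul c
      simp only [hEfun]
      refine this.congr_deriv ?_
      ring
    have hD : HasDerivAt (fun t => k + l + ρ t n m * σM t n m)
        ((k + l) * (ρ x n m * σM x n m)) x := hE.const_add (k + l)
    have hE' := hE.const_mul (k + l)
    have hdiv := hE'.div hD (hM' x n m)
    have hval : (fun t => u t n m) =
        fun t => (k + l) * (ρ t n m * σM t n m) / (k + l + ρ t n m * σM t n m) := by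
      funext t; exact hu' t n m
    rw [hval, hu']
    refine hdiv.congr_deriv ?_
    have hD0 := hM' x n m
    field_simp
  have h := (key n (m + 1)).sub (key (n + 1) m)
  refine h.congr_deriv ?_
  -- shift relations
  have hρn : ρ x (n + 1) m = (p + k) * ρ x n m := by
    rw [hρ, hρ, zpow_add_one₀ hpk]; ring
  have hρm : ρ x n (m + 1) = (q + k) * ρ x n m := by
    rw [hρ, hρ, zpow_add_one₀ hqk]; ring
  have hρnm : ρ x (n + 1) (m + 1) = (p + k) * ((q + k) * ρ x n m) := by
    rw [hρ, hρ, zpow_add_one₀ hpk, zpow_add_one₀ hqk]; ring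
  have hσn : σM x (n + 1) m = σM x n m / (p - l) := by
    rw [hσ, hσ, neg_add, zpow_add₀ hpl, zpow_neg_one]
    field_simp
  have hσm : σM x n (m + 1) = σM x n m / (q - l) := by
    rw [hσ, hσ, neg_add (b := (1:ℤ)), zpow_add₀ hql, zpow_neg_one]
    field_simp
  have hσnm : σM x (n + 1) (m + 1) = σM x n m / (p - l) / (q - l) := by
    rw [hσ, hσ, neg_add, neg_add, zpow_add₀ hpl, zpow_add₀ hql, zpow_neg_one,
      zpow_neg_one]
    field_simp
  have h00 := hM' x n m
  have h10 := hM' x (n + 1) m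
  have h01 := hM' x n (m + 1)
  have h11 := hM' x (n + 1) (m + 1)
  rw [hρn, hσn] at h10
  rw [hρm, hσm] at h01
  rw [hρnm, hσnm] at h11
  set R := ρ x n m with hR
  set S := σM x n m with hS
  have H10 : (k + l) * (p - l) + (p + k) * (R * S) ≠ 0 := by
    intro hc; apply h10; field_simp; linear_combination hc
  have H01 : (k + l) * (q - l) + (q + k) * (R * S) ≠ 0 := by
    intro hc; apply h01; field_simp; linear_combination hc
  have H11 : (k + l) * ((p - l) * (q - l)) + (p + k) * (q + k) * (R * S) ≠ 0 := by
    intro hc; apply h11; field_simp; linear_combination hc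
  have U00 : u x n m = (k + l) * (R * S) / (k + l + R * S) := hu' x n m
  have U10 : u x (n + 1) m =
      (k + l) * ((p + k) * (R * S)) / ((k + l) * (p - l) + (p + k) * (R * S)) := by
    rw [hu' x (n + 1) m, hρn, hσn, div_eq_div_iff h10 H10]
    field_simp
  have U01 : u x n (m + 1) =
      (k + l) * ((q + k) * (R * S)) / ((k + l) * (q - l) + (q + k) * (R * S)) := by
    rw [hu' x n (m + 1), hρm, hσm, div_eq_div_iff h01 H01]
    field_simp
  have U11 : u x (n + 1) (m + 1) =
      (k + l) * ((p + k) * (q + k) * (R * S)) /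
        ((k + l) * ((p - l) * (q - l)) + (p + k) * (q + k) * (R * S)) := by
    rw [hu' x (n + 1) (m + 1), hρnm, hσnm, div_eq_div_iff h11 H11]
    field_simp
  generalize R * S = T at U00 U10 U01 U11 h00 H10 H01 H11
  clear_value R S
  set D0 := k + l + T with hD0
  set Da := (k + l) * (p - l) + (p + k) * T with hDa
  set Db := (k + l) * (q - l) + (q + k) * T with hDb
  set Dc := (k + l) * ((p - l) * (q - l)) + (p + k) * (q + k) * T with hDc
  set A := (k + l) ^ 3 * (q + k) * (q - l) * T with hA
  set B := (k + l) ^ 3 * (p + k) * (p - l) * T with hB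
  set N1 := (p - q) * Da * Db + (k + l) * T * ((q + k) * Da - (p + k) * Db) with hN1
  set N2 := (k + l) * T * (Da * Db * Dc + (p + k) * (q + k) * D0 * Da * Db
      - (q + k) * D0 * Da * Dc - (p + k) * D0 * Db * Dc) with hN2
  clear_value D0 Da Db Dc A B N1 N2
  have h00' : k + l + T ≠ 0 := by rw [← hD0]; exact h00
  have H10' : (k + l) * (p - l) + (p + k) * T ≠ 0 := by rw [← hDa]; exact H10
  have H01' : (k + l) * (q - l) + (q + k) * T ≠ 0 := by rw [← hDb]; exact H01
  have H11' : (k + l) * ((p - l) * (q - l)) + (p + k) * (q + k) * T ≠ 0 := by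
    rw [← hDc]; exact H11
  have E01 : (k + l) * u x n (m + 1) - u x n (m + 1) ^ 2 = A / Db ^ 2 := by
    rw [U01, hA, hDb]; field_simp [H01']; ring
  have E10 : (k + l) * u x (n + 1) m - u x (n + 1) m ^ 2 = B / Da ^ 2 := by
    rw [U10, hB, hDa]; field_simp [H10']; ring
  have EF1 : p - q + u x n (m + 1) - u x (n + 1) m = N1 / (Da * Db) := by
    rw [U01, U10, hN1]; field_simp; rw [hDa, hDb]; ring
  have EF2 : u x n m + u x (n + 1) (m + 1) - u x n (m + 1) - u x (n + 1) m = N2 / (D0 * (Da * (Db * Dc))) := by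
    rw [U00, U01, U10, U11, div_add_div _ _ h00 H11,
      div_sub_div _ _ (mul_ne_zero h00 H11) H01,
      div_sub_div _ _ (mul_ne_zero (mul_ne_zero h00 H11) H01) H10, hN2]
    congr 1 <;> ring
  have key2 : N1 * N2 = (A * Da ^ 2 - B * Db ^ 2) * (D0 * Dc) := by
    rw [hN1, hN2, hA, hB, hD0, hDa, hDb, hDc]; ring
  rw [E01, E10, EF1, EF2, div_mul_div_comm, key2,
    show Da * Db * (D0 * (Da * (Db * Dc))) = Da ^ 2 * Db ^ 2 * (D0 * Dc) by ring,
    mul_div_mul_right _ _ (mul_ne_zero h00 H11),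
    div_sub_div _ _ (pow_ne_zero 2 H01) (pow_ne_zero 2 H10)]
  congr 1 <;> ring
end
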